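/- Fix λ > 0, θ > 0 with θλ a positive integer, step sizes η_i = θ/i, and a_t^i = -η_i · ∏_{j=i+1}^{t} (1 - η_j λ). Then |a_t^i| ≤ θ/t for all 1 ≤ i ≤ t, and moreover a_t^i = 0 whenever i ≤ θλ - 1. -/

import Mathlib

/-- The DSG coefficients `a_t^i = -η_i ∏_{j=i+1}^t (1 - η_j λ)` with `η_i = θ/i`. -/
noncomputable def dsgCoeff (θ lam : ℝ) (t i : ℕ) : ℝ :=
  -(θ / i) * ∏ j ∈ Finset.Icc (i + 1) t, (1 - θ * lam / j)

lemma dsg_telescope (i t : ℕ) (hi : 1 ≤ i) (hit : i ≤ t) :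
    ∏ j ∈ Finset.Icc (i + 1) t, (((j : ℝ) - 1) / j) = (i : ℝ) / t := by
  induction t with
  | zero => omega
  | succ n ih =>
    rcases eq_or_lt_of_le hit with h | h
    · subst h
      rw [Finset.Icc_eq_empty (by omega), Finset.prod_empty]
      push_cast
      rw [div_self (by positivity)]
    · have hin : i ≤ n := by omega
      have hn1 : (1:ℕ) ≤ n := le_trans hi hin
      rw [Finset.prod_Icc_succ_top (by omega : i + 1 ≤ n + 1), ih hin]
      have hn0 : (n : ℝ) ≠ 0 := by positivity
      have hn10 : ((n : ℝ) + 1) ≠ 0 := by positivity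
      push_cast
      field_simp
      ring

theorem dsg_coeff_bound_int_case (θ lam : ℝ) (hθ : 0 < θ) (hlam : 0 < lam)
    (hint : ∃ m : ℕ, 0 < m ∧ θ * lam = m) (t : ℕ) (ht : 1 ≤ t)
    (hmt : θ * lam ≤ t) :
    (∀ i : ℕ, 1 ≤ i → i ≤ t → |dsgCoeff θ lam t i| ≤ θ / t) ∧
    (∀ i : ℕ, 1 ≤ i → (i : ℝ) ≤ θ * lam - 1 → dsgCoeff θ lam t i = 0) := by
  obtain ⟨m, hm0, hm⟩ := hint
  have hmt' : m ≤ t := by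
    have : (m : ℝ) ≤ (t : ℝ) := hm ▸ hmt
    exact_mod_cast this
  have hzero : ∀ i : ℕ, 1 ≤ i → (i : ℝ) ≤ θ * lam - 1 → dsgCoeff θ lam t i = 0 := by
    intro i hi hile
    have him : i + 1 ≤ m := by
      have : (i : ℝ) ≤ (m : ℝ) - 1 := by rw [← hm]; exact hile
      have : (i : ℝ) + 1 ≤ (m : ℝ) := by linarith
      exact_mod_cast this
    have hmem : m ∈ Finset.Icc (i + 1) t := Finset.mem_Icc.mpr ⟨him, hmt'⟩
    unfold dsgCoeff
    rw [Finset.prod_eq_zero hmem, mul_zero]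
    rw [hm, div_self (by exact_mod_cast hm0.ne' : (m : ℝ) ≠ 0)]
    ring
  refine ⟨?_, hzero⟩
  intro i hi hit
  by_cases hc : (i : ℝ) ≤ θ * lam - 1
  · rw [hzero i hi hc, abs_zero]
    positivity
  · -- m ≤ i
    have hmi : m ≤ i := by
      have : (m : ℝ) - 1 < (i : ℝ) := by rw [← hm]; linarith [not_le.mp hc]
      have : (m : ℝ) ≤ (i : ℝ) + 1 := by linarith
      have : m ≤ i + 1 := by exact_mod_cast this
      by_contra hlt
      push_neg at hlt
      have : i + 1 ≤ m := hlt
      have : (i : ℝ) + 1 ≤ (m : ℝ) := by exact_mod_cast this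
      rw [← hm] at this
      exact hc (by linarith)
    have hPnonneg : ∀ j ∈ Finset.Icc (i + 1) t, (0:ℝ) ≤ 1 - θ * lam / j := by
      intro j hj
      obtain ⟨hj1, hj2⟩ := Finset.mem_Icc.mp hj
      have hjpos : (0:ℝ) < j := by exact_mod_cast (by omega : 0 < j)
      have hmj : (m : ℝ) ≤ (j : ℝ) := by exact_mod_cast (by omega : m ≤ j)
      rw [hm]
      rw [sub_nonneg, div_le_one hjpos]
      exact hmj
    have hPle : ∀ j ∈ Finset.Icc (i + 1) t, 1 - θ * lam / j ≤ ((j : ℝ) - 1) / j := by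
      intro j hj
      obtain ⟨hj1, hj2⟩ := Finset.mem_Icc.mp hj
      have hjpos : (0:ℝ) < j := by exact_mod_cast (by omega : 0 < j)
      have hm1 : (1:ℝ) ≤ (m : ℝ) := by exact_mod_cast hm0
      have h1 : ((j:ℝ) - 1) / j = 1 - 1 / j := by field_simp
      rw [h1, hm]
      have h2 : (1:ℝ) / j ≤ (m : ℝ) / j := by gcongr
      linarith
    have hprodle : (∏ j ∈ Finset.Icc (i + 1) t, (1 - θ * lam / j)) ≤ (i : ℝ) / t :=
      (Finset.prod_le_prod hPnonneg hPle).trans_eq (dsg_telescope i t hi hit)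
    have hprodnn : (0:ℝ) ≤ ∏ j ∈ Finset.Icc (i + 1) t, (1 - θ * lam / j) :=
      Finset.prod_nonneg hPnonneg
    have hipos : (0:ℝ) < i := by exact_mod_cast hi
    have htpos : (0:ℝ) < t := by exact_mod_cast ht
    unfold dsgCoeff
    rw [abs_mul, abs_neg, abs_of_nonneg (div_nonneg hθ.le hipos.le),
      abs_of_nonneg hprodnn]
    calc θ / i * ∏ j ∈ Finset.Icc (i + 1) t, (1 - θ * lam / j)
        ≤ θ / i * ((i : ℝ) / t) := by
          exact mul_le_mul_of_nonneg_left hprodle (div_nonneg hθ.le hipos.le)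
      _ = θ / t := by field_simp
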